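/- Let P be a finite connected poset and let I be a subset of P with I ◎ P. Then the induced poset on P \ I is connected. -/

import Mathlib

open scoped Classical

/-- A finite poset on a subset (`carrier`) of an ambient type `α`. -/
structure FinPoset (α : Type*) where
  carrier : Finset α
  le : α → α → Prop
  mem_of_le : ∀ ⦃x y⦄, le x y → x ∈ carrier ∧ y ∈ carrier
  le_refl : ∀ x ∈ carrier, le x x
  le_trans : ∀ ⦃x y z⦄, le x y → le y z → le x z
  le_antisymm : ∀ ⦃x y⦄, le x y → le y x → x = y

namespace FinPoset

variable {α : Type*} [DecidableEq α]

/-- The strict order `x <_P y`. -/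
def lt (P : FinPoset α) (x y : α) : Prop := P.le x y ∧ x ≠ y

/-- `min(P)`: the set of minimal elements of `P`. -/
noncomputable def minSet (P : FinPoset α) : Finset α :=
  P.carrier.filter (fun x => ∀ y, P.le y x → y = x)

/-- Connectivity of a subset `S`, for the graph with edges between comparable pairs. -/
def ConnOn (P : FinPoset α) (S : Set α) : Prop :=
  ∀ x ∈ S, ∀ y ∈ S,
    Relation.ReflTransGen (fun a b => a ∈ S ∧ b ∈ S ∧ (P.le a b ∨ P.le b a)) x y

/-- A finite poset is connected if it is nonempty and any two elements are linked by a
chain of comparable pairs. -/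
def Connected (P : FinPoset α) : Prop :=
  P.carrier.Nonempty ∧ P.ConnOn ↑P.carrier

/-- `I` is a connected component of `S` (for the comparability graph of `P`). -/
def IsCC (P : FinPoset α) (S I : Set α) : Prop :=
  I.Nonempty ∧ I ⊆ S ∧ P.ConnOn I ∧
    ∀ x ∈ I, ∀ y ∈ S, (P.le x y ∨ P.le y x) → y ∈ I

/-- `I_- = {x ∈ P \ I : ∃ y ∈ I, x ≤_P y}`. -/
noncomputable def below (P : FinPoset α) (I : Finset α) : Finset α :=
  (P.carrier \ I).filter (fun x => ∃ y ∈ I, P.le x y)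

/-- `I ◎ P` : `I_-` is a singleton `{w}` with `w ∈ min(P)`, and `I` is a connected
component of `{x ∈ P : w <_P x}`. -/
def Circ (P : FinPoset α) (I : Finset α) : Prop :=
  ∃ w, P.below I = {w} ∧ w ∈ P.minSet ∧
    P.IsCC {x | x ∈ P.carrier ∧ P.lt w x} ↑I

/-- The induced poset on a subset `S`. -/
def restrict (P : FinPoset α) (S : Finset α) : FinPoset α where
  carrier := P.carrier ∩ S
  le x y := P.le x y ∧ x ∈ S ∧ y ∈ S
  mem_of_le := by
    intro x y h
    rcases P.mem_of_le h.1 with ⟨hx, hy⟩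
    exact ⟨Finset.mem_inter.2 ⟨hx, h.2.1⟩, Finset.mem_inter.2 ⟨hy, h.2.2⟩⟩
  le_refl := by
    intro x hx
    rcases Finset.mem_inter.1 hx with ⟨h1, h2⟩
    exact ⟨P.le_refl x h1, h2, h2⟩
  le_trans := by
    rintro x y z ⟨h1, hx, hy⟩ ⟨h2, _, hz⟩
    exact ⟨P.le_trans h1 h2, hx, hz⟩
  le_antisymm := by
    rintro x y ⟨h1, _, _⟩ ⟨h2, _, _⟩
    exact P.le_antisymm h1 h2

/-- The grafting `P ↘_v Q` of `P` above the vertex `v` of `Q` (auxiliary version, with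
the disjointness hypotheses as arguments). -/
def graftAux (P Q : FinPoset α) (v : α) (hd : Disjoint P.carrier Q.carrier)
    (hv : v ∈ Q.carrier) : FinPoset α where
  carrier := P.carrier ∪ Q.carrier
  le x y := P.le x y ∨ Q.le x y ∨ (Q.le x v ∧ y ∈ P.carrier)
  mem_of_le := by
    rintro x y (h | h | ⟨h1, h2⟩)
    · rcases P.mem_of_le h with ⟨hx, hy⟩
      exact ⟨Finset.mem_union_left _ hx, Finset.mem_union_left _ hy⟩
    · rcases Q.mem_of_le h with ⟨hx, hy⟩
      exact ⟨Finset.mem_union_right _ hx, Finset.mem_union_right _ hy⟩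
    · exact ⟨Finset.mem_union_right _ (Q.mem_of_le h1).1, Finset.mem_union_left _ h2⟩
  le_refl := by
    intro x hx
    rcases Finset.mem_union.1 hx with h | h
    · exact Or.inl (P.le_refl x h)
    · exact Or.inr (Or.inl (Q.le_refl x h))
  le_trans := by
    rintro x y z (h1 | h1 | ⟨h1, h1'⟩) (h2 | h2 | ⟨h2, h2'⟩)
    · exact Or.inl (P.le_trans h1 h2)
    · exact absurd (Q.mem_of_le h2).1 (Finset.disjoint_left.1 hd (P.mem_of_le h1).2)
    · exact absurd (Q.mem_of_le h2).1 (Finset.disjoint_left.1 hd (P.mem_of_le h1).2)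
    · exact absurd (P.mem_of_le h2).1 (Finset.disjoint_right.1 hd (Q.mem_of_le h1).2)
    · exact Or.inr (Or.inl (Q.le_trans h1 h2))
    · exact Or.inr (Or.inr ⟨Q.le_trans h1 h2, h2'⟩)
    · exact Or.inr (Or.inr ⟨h1, (P.mem_of_le h2).2⟩)
    · exact absurd (Q.mem_of_le h2).1 (Finset.disjoint_left.1 hd h1')
    · exact absurd (Q.mem_of_le h2).1 (Finset.disjoint_left.1 hd h1')
  le_antisymm := by
    rintro x y (h1 | h1 | ⟨h1, h1'⟩) (h2 | h2 | ⟨h2, h2'⟩)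
    · exact P.le_antisymm h1 h2
    · exact absurd (Q.mem_of_le h2).1 (Finset.disjoint_left.1 hd (P.mem_of_le h1).2)
    · exact absurd (Q.mem_of_le h2).1 (Finset.disjoint_left.1 hd (P.mem_of_le h1).2)
    · exact absurd (P.mem_of_le h2).1 (Finset.disjoint_right.1 hd (Q.mem_of_le h1).2)
    · exact Q.le_antisymm h1 h2
    · exact absurd (Q.mem_of_le h1).1 (Finset.disjoint_left.1 hd h2')
    · exact absurd (P.mem_of_le h2).2 (Finset.disjoint_right.1 hd (Q.mem_of_le h1).1)
    · exact absurd (Q.mem_of_le h2).1 (Finset.disjoint_left.1 hd h1')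
    · exact absurd (Q.mem_of_le h1).1 (Finset.disjoint_left.1 hd h2')
  
/-- The grafting `P ↘_v Q` of `P` above the vertex `v` of `Q`: the poset on
`X₁ ⊔ X₂` restricting to `P` on `X₁` and to `Q` on `X₂`, with `q ≤ p` for `q ∈ X₂`,
`p ∈ X₁` iff `q ≤_Q v`.  (Junk value when the carriers are not disjoint or `v ∉ Q`.) -/
noncomputable def graft (P Q : FinPoset α) (v : α) : FinPoset α :=
  if h : Disjoint P.carrier Q.carrier ∧ v ∈ Q.carrier then P.graftAux Q v h.1 h.2 else P

/-- The set of subsets `I` of the carrier with `I ◎ P`. -/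
noncomputable def circSet (P : FinPoset α) : Finset (Finset α) :=
  P.carrier.powerset.filter (fun I => P.Circ I)

/-- Order isomorphisms from `A` to `B`, encoded as maps `α → α` that are the identity
outside of the carrier of `A`. -/
def Isos (A B : FinPoset α) : Set (α → α) :=
  {f | Set.BijOn f ↑A.carrier ↑B.carrier ∧
    (∀ x ∈ A.carrier, ∀ y ∈ A.carrier, (A.le x y ↔ B.le (f x) (f y))) ∧
    ∀ x, x ∉ A.carrier → f x = x}

/-- `⟨A, B⟩`: the number of order isomorphisms from `A` to `B`. -/
noncomputable def pairing (A B : FinPoset α) : ℕ := Nat.card ↥(Isos A B)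

/-- The NAP coproduct `δ(P) = (1/|min(P)|) Σ_{I ◎ P} I ⊗ (P \ I)`, with values in the
rational vector space spanned by pairs of finite posets. -/
noncomputable def delta (P : FinPoset α) : (FinPoset α × FinPoset α) →₀ ℚ :=
  ((P.minSet.card : ℚ))⁻¹ • ∑ I ∈ P.circSet,
    Finsupp.single (P.restrict I, P.restrict (P.carrier \ I)) (1 : ℚ)

end FinPoset

/-- If `P` is a finite connected poset and `I ◎ P`, then the induced
poset on `P \ I` is connected. -/
theorem connected_sdiff_of_circ {α : Type*} [DecidableEq α] (P : FinPoset α)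
    (hP : P.Connected) (I : Finset α) (hI : I ⊆ P.carrier) (hIc : P.Circ I) :
    (P.restrict (P.carrier \ I)).Connected := by
  obtain ⟨w, hbelow, hwmin, hIcc⟩ := hIc
  have hwmem : w ∈ P.below I := by rw [hbelow]; exact Finset.mem_singleton_self w
  have hw1 : w ∈ P.carrier \ I := (Finset.mem_filter.1 hwmem).1
  have hwc : w ∈ P.carrier := (Finset.mem_sdiff.1 hw1).1
  have hwI : w ∉ I := (Finset.mem_sdiff.1 hw1).2
  have hIlt : ∀ y ∈ I, P.le w y := by
    intro y hy
    have := hIcc.2.1 (show y ∈ (↑I : Set α) from hy)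
    exact this.2.1
  have huniq : ∀ x, x ∈ P.carrier → x ∉ I → (∃ y ∈ I, P.le x y) → x = w := by
    intro x hx hxI hex
    have : x ∈ P.below I := Finset.mem_filter.2 ⟨Finset.mem_sdiff.2 ⟨hx, hxI⟩, hex⟩
    rw [hbelow] at this; exact Finset.mem_singleton.1 this
  set Q := P.restrict (P.carrier \ I) with hQ
  have hQcar : Q.carrier = P.carrier \ I := by
    simp [hQ, FinPoset.restrict, Finset.inter_eq_right.2 (Finset.sdiff_subset)]
  have hmemQ : ∀ a, a ∈ P.carrier → a ∉ I → a ∈ (↑Q.carrier : Set α) := by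
    intro a ha haI
    simp [hQcar, Finset.mem_sdiff, ha, haI]
  set R' : α → α → Prop := fun a b =>
    a ∈ (↑Q.carrier : Set α) ∧ b ∈ (↑Q.carrier : Set α) ∧ (Q.le a b ∨ Q.le b a) with hR'
  set f : α → α := fun a => if a ∈ I then w else a with hf
  have hQle : ∀ a b, a ∈ P.carrier → b ∈ P.carrier → a ∉ I → b ∉ I → P.le a b → Q.le a b := by
    intro a b ha hb haI hbI hab
    exact ⟨hab, Finset.mem_sdiff.2 ⟨ha, haI⟩, Finset.mem_sdiff.2 ⟨hb, hbI⟩⟩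
  have step : ∀ b c, b ∈ P.carrier → c ∈ P.carrier → (P.le b c ∨ P.le c b) →
      Relation.ReflTransGen R' (f b) (f c) := by
    intro b c hb hc hbc
    by_cases hbI : b ∈ I <;> by_cases hcI : c ∈ I
    · simp only [hf, if_pos hbI, if_pos hcI]
      exact Relation.ReflTransGen.refl
    · -- b ∈ I, c ∉ I
      rcases hbc with h | h
      · -- b ≤ c, with w ≤ b ≤ c : f b = w comparable with c
        have hwc' : P.le w c := P.le_trans (hIlt b hbI) h
        have : R' w c := ⟨hmemQ w hwc hwI, hmemQ c hc hcI,
          Or.inl (hQle w c hwc hc hwI hcI hwc')⟩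
        simp only [hf, if_pos hbI, if_neg hcI]
        exact Relation.ReflTransGen.single this
      · -- c ≤ b, c ∈ below I so c = w
        have : c = w := huniq c hc hcI ⟨b, hbI, h⟩
        simp only [hf, if_pos hbI, if_neg hcI, this, if_neg hwI]
        exact Relation.ReflTransGen.refl
    · -- b ∉ I, c ∈ I
      rcases hbc with h | h
      · have : b = w := huniq b hb hbI ⟨c, hcI, h⟩
        simp only [hf, if_neg hbI, if_pos hcI, this, if_neg hwI]
        exact Relation.ReflTransGen.refl
      · have hwb : P.le w b := P.le_trans (hIlt c hcI) h
        have : R' b w := ⟨hmemQ b hb hbI, hmemQ w hwc hwI,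
          Or.inr (hQle w b hwc hb hwI hbI hwb)⟩
        simp only [hf, if_pos hcI, if_neg hbI]
        exact Relation.ReflTransGen.single this
    · -- neither in I
      have : R' b c := ⟨hmemQ b hb hbI, hmemQ c hc hcI, by
        rcases hbc with h | h
        · exact Or.inl (hQle b c hb hc hbI hcI h)
        · exact Or.inr (hQle c b hc hb hcI hbI h)⟩
      simp only [hf, if_neg hbI, if_neg hcI]
      exact Relation.ReflTransGen.single this
  have key : ∀ a b : α,
      Relation.ReflTransGen
        (fun u v => u ∈ (↑P.carrier : Set α) ∧ v ∈ (↑P.carrier : Set α) ∧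
          (P.le u v ∨ P.le v u)) a b →
      Relation.ReflTransGen R' (f a) (f b) := by
    intro a b h
    induction h with
    | refl => exact Relation.ReflTransGen.refl
    | tail _ hstep ih =>
      obtain ⟨hb, hc, hbc⟩ := hstep
      exact ih.trans (step _ _ hb hc hbc)
  constructor
  · exact ⟨w, by rw [hQcar]; exact hw1⟩
  · intro x hx y hy
    have hx' : x ∈ P.carrier ∧ x ∉ I := by
      rw [hQcar] at hx; exact Finset.mem_sdiff.1 hx
    have hy' : y ∈ P.carrier ∧ y ∉ I := by
      rw [hQcar] at hy; exact Finset.mem_sdiff.1 hy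
    have hpath := hP.2 x hx'.1 y hy'.1
    have := key x y hpath
    simpa [hf, hx'.2, hy'.2, hR'] using this
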